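/- Let $\Gamma$ be a linearly ordered abelian group and $\{\gamma_\eta\}$ a strictly increasing sequence in $\Gamma$ indexed by a linear order. Let $c_1 + n_1 x, \ldots, c_m + n_m x$ be finitely many affine functions with $c_i \in \Gamma$ and the coefficients $n_i$ lying in an ordered ring acting on $\Gamma$ in an order-preserving way, with the $n_i$ pairwise distinct. Then there is an index $\mu$ and a permutation $i_1,\ldots,i_m$ of $\{1,\ldots,m\}$ such that for all $\eta > \mu$: $c_{i_1} + n_{i_1}\gamma_\eta < c_{i_2} + n_{i_2}\gamma_\eta < \cdots < c_{i_m} + n_{i_m}\gamma_\eta$. -/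

import Mathlib

/-- In an ordered module `Γ` over an ordered ring `R`, given a strictly
increasing sequence `γ_η` indexed by a linear order with no maximum and finitely many
affine functions `c_i + n_i • x` with pairwise distinct coefficients `n_i`, there is an
index `μ` and a permutation arranging the affine functions in strictly increasing order
at every `γ_η` with `η > μ`. -/
theorem stmt1 (R Γ ι : Type*) [CommRing R] [LinearOrder R] [IsStrictOrderedRing R]
    [AddCommGroup Γ] [LinearOrder Γ] [IsOrderedAddMonoid Γ]
    [Module R Γ]
    (hpos : ∀ (r : R) (x : Γ), 0 < r → 0 < x → 0 < r • x)
    [LinearOrder ι] [Nonempty ι] [NoMaxOrder ι]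
    (γ : ι → Γ) (hγ : StrictMono γ)
    (m : ℕ) (c : Fin m → Γ) (nc : Fin m → R) (hnc : Function.Injective nc) :
    ∃ (μ : ι) (e : Equiv.Perm (Fin m)),
      ∀ η, μ < η → StrictMono (fun i : Fin m => c (e i) + nc (e i) • γ η) := by
  classical
  -- strict monotonicity of positive scalar action
  have hsm : ∀ {r : R}, 0 < r → ∀ {x y : Γ}, x < y → r • x < r • y := by
    intro r hr x y hxy
    have h := hpos r (y - x) hr (sub_pos.mpr hxy)
    rw [smul_sub] at h
    exact sub_pos.mp h
  -- pair lemma for nc i < nc j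
  have pair : ∀ i j : Fin m, nc i < nc j → ∃ μ : ι,
      (∀ η, μ < η → c i + nc i • γ η < c j + nc j • γ η) ∨
      (∀ η, μ < η → c j + nc j • γ η < c i + nc i • γ η) := by
    intro i j hij
    have hd : (0:R) < nc j - nc i := sub_pos.mpr hij
    by_cases h : ∃ η₀, c i - c j ≤ (nc j - nc i) • γ η₀
    · obtain ⟨η₀, h₀⟩ := h
      refine ⟨η₀, Or.inl ?_⟩
      intro η hη
      have h1 : (nc j - nc i) • γ η₀ < (nc j - nc i) • γ η := hsm hd (hγ hη)
      have h2 : c i - c j < nc j • γ η - nc i • γ η := by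
        rw [← sub_smul]; exact lt_of_le_of_lt h₀ h1
      exact (sub_lt_sub_iff.mp h2).trans_eq (add_comm _ _)
    · push_neg at h
      refine ⟨Classical.arbitrary ι, Or.inr ?_⟩
      intro η _
      have h2 : nc j • γ η - nc i • γ η < c i - c j := by
        rw [← sub_smul]; exact h η
      exact (add_comm _ _).trans_lt (sub_lt_sub_iff.mp h2)
  -- pair lemma for all distinct pairs
  have pair' : ∀ p : Fin m × Fin m, ∃ μ : ι, p.1 ≠ p.2 →
      (∀ η, μ < η → c p.1 + nc p.1 • γ η < c p.2 + nc p.2 • γ η) ∨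
      (∀ η, μ < η → c p.2 + nc p.2 • γ η < c p.1 + nc p.1 • γ η) := by
    rintro ⟨i, j⟩
    by_cases hij : i = j
    · exact ⟨Classical.arbitrary ι, fun h => absurd hij h⟩
    · rcases lt_trichotomy (nc i) (nc j) with h | h | h
      · obtain ⟨μ, hμ⟩ := pair i j h
        exact ⟨μ, fun _ => hμ⟩
      · exact absurd (hnc h) hij
      · obtain ⟨μ, hμ⟩ := pair j i h
        exact ⟨μ, fun _ => hμ.symm⟩
  choose μf hμf using pair'
  obtain ⟨M, hM⟩ := (Finset.image μf Finset.univ).exists_le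
  have hMf : ∀ p, μf p ≤ M := fun p => hM _ (Finset.mem_image_of_mem _ (Finset.mem_univ p))
  -- constancy of pairwise order beyond M
  have const : ∀ i j : Fin m, i ≠ j → ∀ η η', M < η → M < η' →
      c i + nc i • γ η < c j + nc j • γ η →
      c i + nc i • γ η' < c j + nc j • γ η' := by
    intro i j hij η η' hη hη' hlt
    rcases hμf (i, j) hij with h | h
    · exact h η' (lt_of_le_of_lt (hMf (i, j)) hη')
    · exact absurd hlt (lt_asymm (h η (lt_of_le_of_lt (hMf (i, j)) hη)))
  obtain ⟨η₀, hη₀⟩ := exists_gt M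
  set v : Fin m → Γ := fun i => c i + nc i • γ η₀ with hv
  have vinj : Function.Injective v := by
    intro i j hvij
    by_contra hij
    rcases hμf (i, j) hij with h | h
    · exact absurd hvij (ne_of_lt (h η₀ ((hMf (i, j)).trans_lt hη₀)))
    · exact absurd hvij.symm (ne_of_lt (h η₀ ((hMf (i, j)).trans_lt hη₀)))
  set e := Tuple.sort v with he
  have hmono : StrictMono (v ∘ e) :=
    (Tuple.monotone_sort v).strictMono_of_injective (vinj.comp e.injective)
  refine ⟨M, e, ?_⟩
  intro η hη i j hij
  have hne : e i ≠ e j := fun h => (ne_of_lt hij) (e.injective h)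
  exact const (e i) (e j) hne η₀ η hη₀ hη (hmono hij)
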